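/- For every n ≥ 5, any function c from the 2-element subsets of {1,...,n} to {1,...,n-3} admits two disjoint 2-element subsets A, B with c(A) = c(B). -/

import Mathlib

open Finset

lemma pair_struct {A : Finset ℕ} {x : ℕ} (h2 : A.card = 2) (hx : x ∈ A) :
    ∃ a, a ≠ x ∧ A = {x, a} := by
  have h1 : (A.erase x).card = 1 := by rw [Finset.card_erase_of_mem hx, h2]
  obtain ⟨a, ha⟩ := Finset.card_eq_one.mp h1
  have hax : a ∈ A.erase x := ha ▸ Finset.mem_singleton_self a
  exact ⟨a, (Finset.mem_erase.mp hax).1, by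
    rw [← Finset.insert_erase hx, ha]⟩

lemma meet_pair {C A : Finset ℕ} {x a : ℕ} (hA : A = {x, a}) (hnd : ¬Disjoint C A)
    (hxC : x ∉ C) : a ∈ C := by
  obtain ⟨y, hyC, hyA⟩ := Finset.not_disjoint_iff.mp hnd
  rw [hA] at hyA
  rcases Finset.mem_insert.mp hyA with h | h
  · exact absurd (h ▸ hyC) hxC
  · exact (Finset.mem_singleton.mp h) ▸ hyC

lemma star_or_triangle (F : Finset (Finset ℕ)) (h2 : ∀ A ∈ F, A.card = 2)
    (hint : ∀ A ∈ F, ∀ B ∈ F, ¬Disjoint A B) :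
    (∃ v, ∀ A ∈ F, v ∈ A) ∨ (∃ T : Finset ℕ, T.card = 3 ∧ ∀ A ∈ F, A ⊆ T) := by
  rcases F.eq_empty_or_nonempty with rfl | ⟨A, hA⟩
  · exact Or.inl ⟨0, by simp⟩
  by_cases hstar0 : ∀ C ∈ F, ∃ x ∈ C, ∀ D ∈ F, x ∈ D
  · obtain ⟨x, _, hx⟩ := hstar0 A hA
    exact Or.inl ⟨x, hx⟩
  push_neg at hstar0
  obtain ⟨B, hB, hB'⟩ := hstar0
  -- B = {p, q}; there is C1 missing p and C2 missing q
  have hBne : B.Nonempty := by rw [← Finset.card_pos, h2 B hB]; norm_num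
  obtain ⟨p, hp⟩ := hBne
  obtain ⟨q, hqp, hBpq⟩ := pair_struct (h2 B hB) hp
  obtain ⟨C1, hC1, hpC1⟩ := hB' p hp
  have hq : q ∈ B := by rw [hBpq]; simp
  obtain ⟨C2, hC2, hqC2⟩ := hB' q hq
  -- q ∈ C1, p ∈ C2
  have hqC1 : q ∈ C1 := meet_pair hBpq (hint C1 hC1 B hB) hpC1
  have hpC2 : p ∈ C2 := by
    have : B = {q, p} := by rw [hBpq]; exact Finset.pair_comm p q
    exact meet_pair this (hint C2 hC2 B hB) hqC2
  obtain ⟨a, hap, hC2e⟩ := pair_struct (h2 C2 hC2) hpC2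
  -- a ≠ q since q ∉ C2
  have haq : a ≠ q := fun h => hqC2 (h ▸ (by rw [hC2e]; simp))
  -- C1 contains q and meets C2 = {p, a} without containing p, so a ∈ C1
  have haC1 : a ∈ C1 := meet_pair hC2e (hint C1 hC1 C2 hC2) hpC1
  have hC1e : C1 = {q, a} := by
    obtain ⟨a', ha'q, hC1e'⟩ := pair_struct (h2 C1 hC1) hqC1
    have : a ∈ ({q, a'} : Finset ℕ) := hC1e' ▸ haC1
    rcases Finset.mem_insert.mp this with h | h
    · exact absurd h haq
    · rw [hC1e', Finset.mem_singleton.mp h]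
  -- T = {p, q, a}
  refine Or.inr ⟨{p, q, a}, ?_, ?_⟩
  · have hpqa : p ∉ ({q, a} : Finset ℕ) := by
      simp only [Finset.mem_insert, Finset.mem_singleton, not_or]
      exact ⟨fun h => hqp h.symm, fun h => hap h.symm⟩
    have hqa : q ∉ ({a} : Finset ℕ) := by
      simp only [Finset.mem_singleton]; exact fun h => haq h.symm
    rw [Finset.card_insert_of_notMem hpqa, Finset.card_insert_of_notMem hqa,
      Finset.card_singleton]
  · intro D hD d hd
    by_contra hdT
    simp only [Finset.mem_insert, Finset.mem_singleton, not_or] at hdT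
    obtain ⟨hdp, hdq, hda⟩ := hdT
    obtain ⟨e, hed, hDe⟩ := pair_struct (h2 D hD) hd
    -- D meets B = {p,q}: d ∉ {p,q} so e ∈ {p,q}
    have heB : e ∈ B := by
      obtain ⟨y, hyD, hyB⟩ := Finset.not_disjoint_iff.mp (hint D hD B hB)
      rw [hDe] at hyD
      rcases Finset.mem_insert.mp hyD with h | h
      · subst h
        rw [hBpq] at hyB
        rcases Finset.mem_insert.mp hyB with h' | h'
        · exact absurd h' hdp
        · exact absurd (Finset.mem_singleton.mp h') hdq
      · exact (Finset.mem_singleton.mp h) ▸ hyB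
    -- similarly D meets C1 = {q,a} and C2 = {p,a}
    have heC1 : e ∈ C1 := by
      obtain ⟨y, hyD, hyC⟩ := Finset.not_disjoint_iff.mp (hint D hD C1 hC1)
      rw [hDe] at hyD
      rcases Finset.mem_insert.mp hyD with h | h
      · subst h
        rw [hC1e] at hyC
        rcases Finset.mem_insert.mp hyC with h' | h'
        · exact absurd h' hdq
        · exact absurd (Finset.mem_singleton.mp h') hda
      · exact (Finset.mem_singleton.mp h) ▸ hyC
    have heC2 : e ∈ C2 := by
      obtain ⟨y, hyD, hyC⟩ := Finset.not_disjoint_iff.mp (hint D hD C2 hC2)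
      rw [hDe] at hyD
      rcases Finset.mem_insert.mp hyD with h | h
      · subst h
        rw [hC2e] at hyC
        rcases Finset.mem_insert.mp hyC with h' | h'
        · exact absurd h' hdp
        · exact absurd (Finset.mem_singleton.mp h') hda
      · exact (Finset.mem_singleton.mp h) ▸ hyC
    -- e ∈ B ∩ C1 ∩ C2 = {p,q} ∩ {q,a} ∩ {p,a} = ∅
    rw [hBpq] at heB; rw [hC1e] at heC1; rw [hC2e] at heC2
    simp only [Finset.mem_insert, Finset.mem_singleton] at heB heC1 heC2
    rcases heB with rfl | rfl
    · rcases heC1 with h | h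
      · exact hqp h.symm
      · exact hap h.symm
    · rcases heC2 with h | h
      · exact hqp h
      · exact haq h.symm

theorem kneser_lovasz_k2 (n : ℕ) (hn : 5 ≤ n) (c : Finset ℕ → ℕ)
    (hc : ∀ A ⊆ Finset.Icc 1 n, A.card = 2 → c A ∈ Finset.Icc 1 (n - 3)) :
    ∃ A B : Finset ℕ, A ⊆ Finset.Icc 1 n ∧ B ⊆ Finset.Icc 1 n ∧
      A.card = 2 ∧ B.card = 2 ∧ Disjoint A B ∧ c A = c B := by
  classical
  by_contra hcon
  -- each color class is intersecting
  set F : ℕ → Finset (Finset ℕ) :=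
    fun i => ((Finset.Icc 1 n).powersetCard 2).filter (fun A => c A = i) with hF
  have hFmem : ∀ i A, A ∈ F i ↔ (A ⊆ Finset.Icc 1 n ∧ A.card = 2 ∧ c A = i) := by
    intro i A
    simp [hF, Finset.mem_powersetCard, and_assoc]
  have hint : ∀ i, ∀ A ∈ F i, ∀ B ∈ F i, ¬Disjoint A B := by
    intro i A hA B hB hD
    obtain ⟨hA1, hA2, hA3⟩ := (hFmem i A).mp hA
    obtain ⟨hB1, hB2, hB3⟩ := (hFmem i B).mp hB
    exact hcon ⟨A, B, hA1, hB1, hA2, hB2, hD, hA3.trans hB3.symm⟩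
  have hFi : ∀ i, (∃ v, ∀ A ∈ F i, v ∈ A) ∨
      (∃ T : Finset ℕ, T.card = 3 ∧ ∀ A ∈ F i, A ⊆ T) := by
    intro i
    exact star_or_triangle (F i) (fun A hA => ((hFmem i A).mp hA).2.1) (hint i)
  set isStar : ℕ → Prop := fun i => ∃ v, ∀ A ∈ F i, v ∈ A with hiS
  have hv' : ∀ i, ∃ v, isStar i → ∀ A ∈ F i, v ∈ A := by
    intro i
    by_cases h : isStar i
    · obtain ⟨v, hv⟩ := h; exact ⟨v, fun _ => hv⟩
    · exact ⟨0, fun h' => absurd h' h⟩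
  choose v hv using hv'
  have hT' : ∀ i, ∃ T : Finset ℕ, ¬isStar i → (T.card = 3 ∧ ∀ A ∈ F i, A ⊆ T) := by
    intro i
    by_cases h : isStar i
    · exact ⟨∅, fun h' => absurd h h'⟩
    · exact ⟨((hFi i).resolve_left h).choose, fun _ => ((hFi i).resolve_left h).choose_spec⟩
  choose T hT using hT'
  set Cs := (Finset.Icc 1 (n - 3)).filter isStar with hCs
  set Ct := (Finset.Icc 1 (n - 3)).filter (fun i => ¬ isStar i) with hCt
  have hst : Cs.card + Ct.card = n - 3 := by
    rw [hCs, hCt, Finset.card_filter_add_card_filter_not, Nat.card_Icc]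
    omega
  set t := Ct.card with ht
  set S := Cs.image v with hSdef
  have hScard : S.card ≤ Cs.card := Finset.card_image_le
  set U := (Finset.Icc 1 n) \ S with hUdef
  have hUcard : t + 3 ≤ U.card := by
    have h1 : (Finset.Icc 1 n).card - S.card ≤ U.card := Finset.le_card_sdiff S _
    rw [Nat.card_Icc] at h1
    omega
  set PU := U.powersetCard 2 with hPU
  have hUsub : U ⊆ Finset.Icc 1 n := Finset.sdiff_subset
  have hmaps : ∀ A ∈ PU, c A ∈ Ct := by
    intro A hA
    rw [Finset.mem_powersetCard] at hA
    obtain ⟨hAU, hA2⟩ := hA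
    have hAI : A ⊆ Finset.Icc 1 n := hAU.trans hUsub
    have hcA : c A ∈ Finset.Icc 1 (n - 3) := hc A hAI hA2
    have hAF : A ∈ F (c A) := (hFmem (c A) A).mpr ⟨hAI, hA2, rfl⟩
    rw [hCt, Finset.mem_filter]
    refine ⟨hcA, fun hstar => ?_⟩
    have hvA : v (c A) ∈ A := hv (c A) hstar A hAF
    have hvS : v (c A) ∈ S := by
      rw [hSdef]
      exact Finset.mem_image_of_mem v (by rw [hCs, Finset.mem_filter]; exact ⟨hcA, hstar⟩)
    have := hAU hvA
    rw [hUdef, Finset.mem_sdiff] at this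
    exact this.2 hvS
  have hfib : ∀ i ∈ Ct, (PU.filter (fun A => c A = i)).card ≤ 3 := by
    intro i hi
    rw [hCt, Finset.mem_filter] at hi
    obtain ⟨hi1, hi2⟩ := hi
    obtain ⟨hT3, hTsub⟩ := hT i hi2
    have hsub : PU.filter (fun A => c A = i) ⊆ (T i).powersetCard 2 := by
      intro A hA
      rw [Finset.mem_filter, Finset.mem_powersetCard] at hA
      obtain ⟨⟨hAU, hA2⟩, hAc⟩ := hA
      have hAF : A ∈ F i := (hFmem i A).mpr ⟨hAU.trans hUsub, hA2, hAc⟩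
      rw [Finset.mem_powersetCard]
      exact ⟨hTsub A hAF, hA2⟩
    calc (PU.filter (fun A => c A = i)).card ≤ ((T i).powersetCard 2).card :=
          Finset.card_le_card hsub
      _ = 3 := by rw [Finset.card_powersetCard, hT3]; rfl
  have hcount : PU.card ≤ 3 * t :=
    Finset.card_le_mul_card_image_of_maps_to hmaps 3 hfib
  have hPUcard : PU.card = U.card.choose 2 := Finset.card_powersetCard 2 U
  have hge : (t + 3).choose 2 ≤ PU.card := by
    rw [hPUcard]
    exact Nat.choose_le_choose 2 hUcard
  have hchoose : (t + 3).choose 2 = (t + 3) * (t + 2) / 2 := by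
    rw [Nat.choose_two_right]
    congr 1
  have hdvd : 2 ∣ (t + 3) * (t + 2) := by
    rw [mul_comm]
    exact (Nat.even_mul_succ_self (t + 2)).two_dvd
  have htt : t ≤ t * t := by
    rcases Nat.eq_zero_or_pos t with h | h
    · simp [h]
    · exact Nat.le_mul_of_pos_left t h
  have hlt : 3 * t < (t + 3) * (t + 2) / 2 := by
    rw [Nat.lt_div_iff_mul_lt' hdvd]
    nlinarith
  omega
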